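/- Let P_S and P_T be domains on X × Y with Y = {−1,1}, and let A ⊆ X × Y be a measurable set with P_S(Aᶜ) = 0 such that the restriction of P_T to A is absolutely continuous with respect to P_S with density ρ. For q > 1, let β_q = (∫ ρ^q dP_S)^{1/q} and let η_Q = E_{(x,y)∼P_T} 1[(x,y) ∈ Aᶜ] · E_{h∼Q} E_{h'∼Q} 1[h(x) ≠ y]·1[h'(x) ≠ y]. Then for every posterior Q on H: e_{P_T}(Q) ≤ β_q · ( e_{P_S}(Q) )^{1−1/q} + η_Q. -/

import Mathlib

/-!
STATEMENT 12: Hölder-inequality step of the paper's main bound: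
`e_{P_T}(Q) ≤ β_q · (e_{P_S}(Q))^{1-1/q} + η_Q`.
`Y = {-1,1}` is encoded as `Bool`; voters are indexed by a measurable space `Ω`
through the evaluation map `ev`.  The inequality is stated in `ℝ≥0∞` so that an
infinite `β_q` gives a vacuous bound.
-/

open MeasureTheory Real
open scoped ENNReal Classical

noncomputable section

theorem holder_step
    {X : Type*} [MeasurableSpace X] {Ω : Type*} [MeasurableSpace Ω]
    (ev : Ω → X → Bool) (hev : Measurable (Function.uncurry ev))
    (PS PT : Measure (X × Bool)) [IsProbabilityMeasure PS] [IsProbabilityMeasure PT]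
    (A : Set (X × Bool)) (hA : MeasurableSet A) (hSA : PS Aᶜ = 0)
    (ρ : X × Bool → ℝ≥0∞) (hρ : Measurable ρ)
    (hdens : PT.restrict A = PS.withDensity ρ)
    (q : ℝ) (hq : 1 < q)
    (Q : Measure Ω) [IsProbabilityMeasure Q] :
    -- e_{P_T}(Q) ≤ β_q (e_{P_S}(Q))^{1-1/q} + η_Q
    ENNReal.ofReal (∫ z, ∫ h, ∫ h',
        (if ev h z.1 ≠ z.2 ∧ ev h' z.1 ≠ z.2 then (1 : ℝ) else 0) ∂Q ∂Q ∂PT)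
      ≤ (∫⁻ z, ρ z ^ q ∂PS) ^ (1 / q)
          * ENNReal.ofReal ((∫ z, ∫ h, ∫ h',
              (if ev h z.1 ≠ z.2 ∧ ev h' z.1 ≠ z.2 then (1 : ℝ) else 0) ∂Q ∂Q ∂PS)
            ^ (1 - 1 / q))
        + ENNReal.ofReal (∫ z, (if z ∈ Aᶜ then (1 : ℝ) else 0) * ∫ h, ∫ h',
            (if ev h z.1 ≠ z.2 ∧ ev h' z.1 ≠ z.2 then (1 : ℝ) else 0) ∂Q ∂Q ∂PT) := by
  classical
  -- the slice set
  set T : X × Bool → Set Ω := fun z => {h | ev h z.1 ≠ z.2} with hT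
  have hTmeas : ∀ z, MeasurableSet (T z) := by
    intro z
    have : Measurable fun h => ev h z.1 := by
      have : (fun h => ev h z.1) = Function.uncurry ev ∘ (fun h => (h, z.1)) := rfl
      rw [this]
      exact hev.comp (measurable_id.prodMk measurable_const)
    exact this (Set.toFinite {b | b ≠ z.2}).measurableSet
  -- G z = (Q (T z))^2 in ℝ≥0∞
  set G : X × Bool → ℝ≥0∞ := fun z => Q (T z) * Q (T z) with hG
  have hmQ : Measurable fun z => Q (T z) := by
    have hs : MeasurableSet {w : (X × Bool) × Ω | ev w.2 w.1.1 ≠ w.1.2} := by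
      have hm : Measurable fun w : (X × Bool) × Ω => (ev w.2 w.1.1, w.1.2) :=
        (hev.comp (measurable_snd.prodMk (measurable_fst.comp measurable_fst))).prodMk
          (measurable_snd.comp measurable_fst)
      exact hm (Set.toFinite {p : Bool × Bool | p.1 ≠ p.2}).measurableSet
    have := measurable_measure_prodMk_left (ν := Q) hs
    convert this using 1
    rfl
  have hGmeas : Measurable G := hmQ.mul hmQ
  have hQle : ∀ z, Q (T z) ≤ 1 := fun z => prob_le_one
  have hGle : ∀ z, G z ≤ 1 := fun z => mul_le_one' (hQle z) (hQle z)
  have hGlt : ∀ z, G z < ∞ := fun z => lt_of_le_of_lt (hGle z) (by norm_num)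
  -- the inner double integral equals (G z).toReal
  have hFeq : ∀ z : X × Bool,
      (∫ h, ∫ h', (if ev h z.1 ≠ z.2 ∧ ev h' z.1 ≠ z.2 then (1 : ℝ) else 0) ∂Q ∂Q)
        = (G z).toReal := by
    intro z
    have hind : ∫ h', (if ev h' z.1 ≠ z.2 then (1 : ℝ) else 0) ∂Q = (Q (T z)).toReal := by
      rw [show (fun h' => (if ev h' z.1 ≠ z.2 then (1 : ℝ) else 0))
          = (T z).indicator 1 from by
        funext h'; simp [Set.indicator_apply, hT]]
      exact integral_indicator_one (hTmeas z)
    have hinner : ∀ h, (∫ h', (if ev h z.1 ≠ z.2 ∧ ev h' z.1 ≠ z.2 then (1 : ℝ) else 0) ∂Q)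
        = (if ev h z.1 ≠ z.2 then (1 : ℝ) else 0) * (Q (T z)).toReal := by
      intro h
      by_cases hc : ev h z.1 ≠ z.2
      · rw [if_pos hc, one_mul, ← hind]
        exact integral_congr_ae (Filter.Eventually.of_forall fun h' =>
          if_congr (and_iff_right hc) rfl rfl)
      · rw [if_neg hc, zero_mul,
          show (fun h' => (if ev h z.1 ≠ z.2 ∧ ev h' z.1 ≠ z.2 then (1:ℝ) else 0))
            = fun _ => 0 from funext fun h' => if_neg fun hcon => hc hcon.1]
        exact integral_zero _ _
    rw [integral_congr_ae (Filter.Eventually.of_forall hinner), integral_mul_const, hind,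
      hG, ENNReal.toReal_mul]
  -- rewrite all three Bochner integrals via lintegrals of G
  have hLle : ∀ (μ : Measure (X × Bool)), μ Set.univ ≤ 1 → ∫⁻ z, G z ∂μ ≤ 1 := by
    intro μ hμ
    calc ∫⁻ z, G z ∂μ ≤ ∫⁻ _, 1 ∂μ := lintegral_mono hGle
    _ = μ Set.univ := lintegral_one
    _ ≤ 1 := hμ
  have key : ∀ (μ : Measure (X × Bool)), μ Set.univ ≤ 1 →
      ∫ z, (G z).toReal ∂μ = (∫⁻ z, G z ∂μ).toReal := by
    intro μ hμ
    exact integral_toReal hGmeas.aemeasurable (Filter.Eventually.of_forall hGlt)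
  -- LHS
  have hLT : ENNReal.ofReal (∫ z, ∫ h, ∫ h',
      (if ev h z.1 ≠ z.2 ∧ ev h' z.1 ≠ z.2 then (1 : ℝ) else 0) ∂Q ∂Q ∂PT)
      = ∫⁻ z, G z ∂PT := by
    rw [integral_congr_ae (Filter.Eventually.of_forall hFeq), key PT prob_le_one,
      ENNReal.ofReal_toReal]
    exact (lt_of_le_of_lt (hLle PT prob_le_one) (by norm_num)).ne
  -- source term
  set LS : ℝ≥0∞ := ∫⁻ z, G z ∂PS with hLS
  have hLSlt : LS < ∞ := lt_of_le_of_lt (hLle PS prob_le_one) (by norm_num)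
  have hSrw : (∫ z, ∫ h, ∫ h',
      (if ev h z.1 ≠ z.2 ∧ ev h' z.1 ≠ z.2 then (1 : ℝ) else 0) ∂Q ∂Q ∂PS) = LS.toReal := by
    rw [integral_congr_ae (Filter.Eventually.of_forall hFeq)]; exact key PS prob_le_one
  have hr0 : (0:ℝ) ≤ 1 - 1/q := by
    have : 1/q ≤ 1 := by
      rw [div_le_one (by linarith)]; linarith
    linarith
  have hSpow : ENNReal.ofReal ((∫ z, ∫ h, ∫ h',
      (if ev h z.1 ≠ z.2 ∧ ev h' z.1 ≠ z.2 then (1 : ℝ) else 0) ∂Q ∂Q ∂PS) ^ (1 - 1/q))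
      = LS ^ (1 - 1/q) := by
    rw [hSrw, ENNReal.toReal_rpow, ENNReal.ofReal_toReal]
    exact ENNReal.rpow_ne_top_of_nonneg hr0 hLSlt.ne
  -- eta term
  have hEta : ENNReal.ofReal (∫ z, (if z ∈ Aᶜ then (1 : ℝ) else 0) * ∫ h, ∫ h',
      (if ev h z.1 ≠ z.2 ∧ ev h' z.1 ≠ z.2 then (1 : ℝ) else 0) ∂Q ∂Q ∂PT)
      = ∫⁻ z, G z ∂(PT.restrict Aᶜ) := by
    have : (fun z => (if z ∈ Aᶜ then (1 : ℝ) else 0) * ∫ h, ∫ h',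
        (if ev h z.1 ≠ z.2 ∧ ev h' z.1 ≠ z.2 then (1 : ℝ) else 0) ∂Q ∂Q)
        = fun z => Aᶜ.indicator (fun z => (G z).toReal) z := by
      funext z
      by_cases hz : z ∈ Aᶜ <;> simp [hz, Set.indicator_apply, hFeq z]
    have h1 : (PT.restrict Aᶜ) Set.univ ≤ 1 := by
      rw [Measure.restrict_apply_univ]; exact prob_le_one
    rw [this, integral_indicator hA.compl,
      show ∫ z in Aᶜ, (G z).toReal ∂PT = (∫⁻ z, G z ∂PT.restrict Aᶜ).toReal from key _ h1,
      ENNReal.ofReal_toReal (lt_of_le_of_lt (hLle _ h1) (by norm_num)).ne]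
  rw [hLT, hSpow, hEta, ← lintegral_add_compl G hA (μ := PT)]
  refine add_le_add ?_ le_rfl
  -- the restricted-to-A part
  have hrwA : ∫⁻ z, G z ∂(PT.restrict A) = ∫⁻ z, ρ z * G z ∂PS := by
    rw [hdens, lintegral_withDensity_eq_lintegral_mul _ hρ hGmeas]; rfl
  set q' : ℝ := Real.conjExponent q with hq'
  have hpq : q.HolderConjugate q' := Real.HolderConjugate.conjExponent hq
  have hHolder : ∫⁻ z, ρ z * G z ∂PS
      ≤ (∫⁻ z, ρ z ^ q ∂PS) ^ (1/q) * (∫⁻ z, G z ^ q' ∂PS) ^ (1/q') :=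
    ENNReal.lintegral_mul_le_Lp_mul_Lq PS hpq hρ.aemeasurable hGmeas.aemeasurable
  have hGpow : ∫⁻ z, G z ^ q' ∂PS ≤ LS := by
    refine lintegral_mono fun z => ?_
    calc G z ^ q' ≤ G z ^ (1:ℝ) :=
          ENNReal.rpow_le_rpow_of_exponent_ge (hGle z) hpq.symm.lt.le
    _ = G z := ENNReal.rpow_one _
  have hfin : (∫⁻ z, G z ^ q' ∂PS) ^ (1/q') ≤ LS ^ (1 - 1/q) := by
    rw [show (1:ℝ) - 1/q = 1/q' from by
      rw [one_div, one_div, hpq.one_sub_inv]]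
    exact ENNReal.rpow_le_rpow hGpow (one_div_nonneg.mpr hpq.symm.nonneg)
  calc ∫⁻ z, G z ∂(PT.restrict A) = ∫⁻ z, ρ z * G z ∂PS := hrwA
  _ ≤ (∫⁻ z, ρ z ^ q ∂PS) ^ (1/q) * (∫⁻ z, G z ^ q' ∂PS) ^ (1/q') := hHolder
  _ ≤ (∫⁻ z, ρ z ^ q ∂PS) ^ (1/q) * LS ^ (1 - 1/q) := mul_le_mul_right hfin _
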